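/- Let G be a weighted graph with w₀-bounded geometry and anchored expansion constant 𝐢(G) > i > 0. Let ℛ be a collection of sets, each a union of i-islands, and let v be a fixed vertex. Suppose for each R ∈ ℛ there exists a bridge structure B interconnecting R ∪ {v} with w₀ · #((B ∪ {v}) ∖ A_i) / |R| ≤ 𝐢(G) − i. Then ℛ is finite. -/

import Mathlib

open scoped BigOperators Classical
open Filter MeasureTheory

variable {V : Type*}

/-- Vertex weight: sum of incident edge weights. -/
noncomputable def vtxWeight (w : V → V → ℝ) (v : V) : ℝ := ∑' u, w v u

/-- Volume of a finite vertex set. -/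
noncomputable def vol (w : V → V → ℝ) (S : Finset V) : ℝ := ∑ v ∈ S, vtxWeight w v

/-- Volume of the edge boundary of a finite vertex set. -/
noncomputable def bdry (w : V → V → ℝ) (S : Finset V) : ℝ :=
  ∑ v ∈ S, ∑' u, ((↑S : Set V)ᶜ).indicator (w v) u

/-- The `i`-isolation `Δ_i S = i|S| - |∂S|`. -/
noncomputable def isol (i : ℝ) (w : V → V → ℝ) (S : Finset V) : ℝ :=
  i * vol w S - bdry w S

/-- An `i`-isolated core: `Δ_i` strictly dominates `Δ_i` of every proper subset. -/
def IsCore (i : ℝ) (w : V → V → ℝ) (S : Finset V) : Prop :=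
  ∀ A : Finset V, A ⊂ S → isol i w A < isol i w S

/-- The union `A_i` of all `i`-isolated cores. -/
def coreUnion (i : ℝ) (w : V → V → ℝ) : Set V :=
  {v | ∃ S : Finset V, IsCore i w S ∧ v ∈ S}

/-- The underlying graph of a weighted graph: adjacency iff positive weight. -/
noncomputable def gra (w : V → V → ℝ) : SimpleGraph V :=
  SimpleGraph.fromRel (fun u v => 0 < w u v)

/-- A set of vertices is connected if its induced subgraph is connected. -/
def ConnSet (w : V → V → ℝ) (S : Set V) : Prop :=
  (SimpleGraph.induce S (gra w)).Connected

/-- `i`-anchored expansion: every vertex lies in only finitely many connected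
finite vertex sets with positive `i`-isolation. -/
def Anchored (i : ℝ) (w : V → V → ℝ) : Prop :=
  ∀ v : V, {S : Finset V | v ∈ S ∧ ConnSet w (↑S) ∧ 0 < isol i w S}.Finite

/-- An `i`-island: a connected component of `A_i`. -/
def IsIsland (i : ℝ) (w : V → V → ℝ) (C : Set V) : Prop :=
  C.Nonempty ∧ C ⊆ coreUnion i w ∧ ConnSet w C ∧
    ∀ C' : Set V, C ⊆ C' → C' ⊆ coreUnion i w → ConnSet w C' → C' = C

/-- Transition kernel of the random walk on the weighted graph. -/
noncomputable def markov (w : V → V → ℝ) (u v : V) : ℝ := w u v / vtxWeight w u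

/-- `n`-step transition kernel of a Markov kernel `p`. -/
noncomputable def kern (p : V → V → ℝ) : ℕ → V → V → ℝ
  | 0, x, y => if x = y then 1 else 0
  | n + 1, x, y => ∑' z, p x z * kern p n z y

set_option linter.unusedSectionVars false
set_option linter.unusedVariables false

noncomputable def qv (w : V → V → ℝ) (S : Finset V) : ℝ := ∑ x ∈ S, ∑ y ∈ S, w x y

theorem bdry_eq (w : V → V → ℝ) (hsum : ∀ v, Summable (w v)) (S : Finset V) :
    bdry w S = vol w S - qv w S := by
  unfold bdry vol qv vtxWeight
  rw [← Finset.sum_sub_distrib]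
  refine Finset.sum_congr rfl fun x hx => ?_
  have h1 : ∑' (u : ↑((↑S : Set V)ᶜ)), w x u = ∑' u, ((↑S : Set V)ᶜ).indicator (w x) u :=
    tsum_subtype _ _
  have h2 := Summable.sum_add_tsum_subtype_compl (hsum x) S
  have h3 : ∑' (u : {u // u ∉ S}), w x u = ∑' (u : ↑((↑S : Set V)ᶜ)), w x u := by
    exact tsum_congr_set_coe _ (by ext u; exact (Finset.mem_coe).symm.not)
  linarith [h1, h2, h3]

section Lemmas
variable [DecidableEq V] {w : V → V → ℝ} {i : ℝ}

theorem vtxWeight_nonneg (hnn : ∀ u v, 0 ≤ w u v) (x : V) : 0 ≤ vtxWeight w x :=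
  tsum_nonneg fun u => hnn x u

theorem vol_nonneg (hnn : ∀ u v, 0 ≤ w u v) (S : Finset V) : 0 ≤ vol w S :=
  Finset.sum_nonneg fun x _ => vtxWeight_nonneg hnn x

theorem vol_mono (hnn : ∀ u v, 0 ≤ w u v) {S T : Finset V} (h : S ⊆ T) :
    vol w S ≤ vol w T :=
  Finset.sum_le_sum_of_subset_of_nonneg h fun x _ _ => vtxWeight_nonneg hnn x

theorem isol_eq (i : ℝ) (hsum : ∀ v, Summable (w v)) (S : Finset V) :
    isol i w S = i * vol w S - (vol w S - qv w S) := by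
  rw [isol, bdry_eq w hsum]

theorem qv_super (hnn : ∀ u v, 0 ≤ w u v) (A B : Finset V) :
    qv w A + qv w B ≤ qv w (A ∪ B) + qv w (A ∩ B) := by
  set u : V → ℝ := fun x => ∑ y ∈ A ∪ B, w x y with hu
  set a : V → ℝ := fun x => ∑ y ∈ A, w x y with ha
  set b : V → ℝ := fun x => ∑ y ∈ B, w x y with hb
  set n : V → ℝ := fun x => ∑ y ∈ A ∩ B, w x y with hn
  have h1 : ∀ x, u x + n x = a x + b x := fun x => Finset.sum_union_inter
  have outer : ∑ x ∈ A ∪ B, u x + ∑ x ∈ A ∩ B, u x = ∑ x ∈ A, u x + ∑ x ∈ B, u x :=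
    Finset.sum_union_inter
  have e1 : ∑ x ∈ A ∩ B, (u x - a x) ≤ ∑ x ∈ A, (u x - a x) := by
    refine Finset.sum_le_sum_of_subset_of_nonneg Finset.inter_subset_left fun x _ _ => ?_
    simp only [sub_nonneg]
    exact Finset.sum_le_sum_of_subset_of_nonneg Finset.subset_union_left
      fun y _ _ => hnn x y
  have e2 : ∑ x ∈ A ∩ B, (u x - b x) ≤ ∑ x ∈ B, (u x - b x) := by
    refine Finset.sum_le_sum_of_subset_of_nonneg Finset.inter_subset_right fun x _ _ => ?_
    simp only [sub_nonneg]
    exact Finset.sum_le_sum_of_subset_of_nonneg Finset.subset_union_right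
      fun y _ _ => hnn x y
  have e3 : ∑ x ∈ A ∩ B, (u x - a x) + ∑ x ∈ A ∩ B, (u x - b x)
      = ∑ x ∈ A ∩ B, (u x - n x) := by
    rw [← Finset.sum_add_distrib]
    exact Finset.sum_congr rfl fun x _ => by have := h1 x; ring_nf; linarith
  have hqA : qv w A = ∑ x ∈ A, a x := rfl
  have hqB : qv w B = ∑ x ∈ B, b x := rfl
  have hqU : qv w (A ∪ B) = ∑ x ∈ A ∪ B, u x := rfl
  have hqN : qv w (A ∩ B) = ∑ x ∈ A ∩ B, n x := rfl
  have d1 : ∑ x ∈ A, (u x - a x) = ∑ x ∈ A, u x - ∑ x ∈ A, a x := Finset.sum_sub_distrib _ _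
  have d2 : ∑ x ∈ B, (u x - b x) = ∑ x ∈ B, u x - ∑ x ∈ B, b x := Finset.sum_sub_distrib _ _
  have d3 : ∑ x ∈ A ∩ B, (u x - n x) = ∑ x ∈ A ∩ B, u x - ∑ x ∈ A ∩ B, n x :=
    Finset.sum_sub_distrib _ _
  linarith

theorem isol_super (hsum : ∀ v, Summable (w v)) (hnn : ∀ u v, 0 ≤ w u v) (A B : Finset V) :
    isol i w A + isol i w B ≤ isol i w (A ∪ B) + isol i w (A ∩ B) := by
  have hv : vol w (A ∪ B) + vol w (A ∩ B) = vol w A + vol w B := Finset.sum_union_inter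
  have hq := qv_super hnn A B
  rw [isol_eq i hsum, isol_eq i hsum, isol_eq i hsum, isol_eq i hsum]
  have hv2 : i * vol w (A ∪ B) + i * vol w (A ∩ B) = i * vol w A + i * vol w B := by
    linear_combination i * hv
  linarith

theorem isol_empty : isol i w (∅ : Finset V) = 0 := by
  simp [isol, vol, bdry]

theorem qv_add_of_sep (hnn : ∀ u v, 0 ≤ w u v) {A B : Finset V} (hd : Disjoint A B)
    (hsep : ∀ a ∈ A, ∀ b ∈ B, w a b = 0 ∧ w b a = 0) :
    qv w (A ∪ B) = qv w A + qv w B := by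
  unfold qv
  rw [Finset.sum_union hd]
  have hA : ∀ x ∈ A, ∑ y ∈ A ∪ B, w x y = ∑ y ∈ A, w x y := by
    intro x hx
    rw [Finset.sum_union hd]
    have : ∑ y ∈ B, w x y = 0 :=
      Finset.sum_eq_zero fun y hy => (hsep x hx y hy).1
    linarith
  have hB : ∀ x ∈ B, ∑ y ∈ A ∪ B, w x y = ∑ y ∈ B, w x y := by
    intro x hx
    rw [Finset.sum_union hd]
    have : ∑ y ∈ A, w x y = 0 :=
      Finset.sum_eq_zero fun y hy => (hsep y hy x hx).2
    linarith
  rw [Finset.sum_congr rfl hA, Finset.sum_congr rfl hB]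

theorem isol_add_of_sep (hsum : ∀ v, Summable (w v)) (hnn : ∀ u v, 0 ≤ w u v)
    {A B : Finset V} (hd : Disjoint A B)
    (hsep : ∀ a ∈ A, ∀ b ∈ B, w a b = 0 ∧ w b a = 0) :
    isol i w (A ∪ B) = isol i w A + isol i w B := by
  have hv : vol w (A ∪ B) = vol w A + vol w B := Finset.sum_union hd
  have hq := qv_add_of_sep hnn hd hsep
  rw [isol_eq i hsum, isol_eq i hsum, isol_eq i hsum, hv, hq]
  ring

theorem core_absorb (hsum : ∀ v, Summable (w v)) (hnn : ∀ u v, 0 ≤ w u v)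
    {S : Finset V} (hS : IsCore i w S) (B : Finset V) :
    isol i w B ≤ isol i w (B ∪ S) ∧ (B ∩ S ≠ S → isol i w B < isol i w (B ∪ S)) := by
  have hsup := isol_super (i := i) hsum hnn B S
  have hBS : isol i w (B ∩ S) ≤ isol i w S := by
    rcases eq_or_ne (B ∩ S) S with h | h
    · rw [h]
    · exact le_of_lt (hS _ (lt_of_le_of_ne Finset.inter_subset_right h))
  constructor
  · linarith
  · intro h
    have := hS _ (lt_of_le_of_ne Finset.inter_subset_right h)
    linarith

theorem IsCore.union (hsum : ∀ v, Summable (w v)) (hnn : ∀ u v, 0 ≤ w u v)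
    {S T : Finset V} (hS : IsCore i w S) (hT : IsCore i w T) : IsCore i w (S ∪ T) := by
  intro A hA
  obtain ⟨hsub, hne⟩ := Finset.ssubset_iff_subset_ne.1 hA
  have hAU : A ∪ S ∪ T = S ∪ T := by
    rw [Finset.union_assoc, Finset.union_eq_right.2 hsub]
  obtain ⟨z, hzST, hzA⟩ := Finset.exists_of_ssubset hA
  by_cases hzS : z ∈ S
  · have h1 : isol i w A < isol i w (A ∪ S) := by
      refine (core_absorb hsum hnn hS A).2 ?_
      intro h
      exact hzA (Finset.mem_inter.1 (h ▸ hzS) |>.1)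
    have h2 : isol i w (A ∪ S) ≤ isol i w (A ∪ S ∪ T) := (core_absorb hsum hnn hT _).1
    rw [hAU] at h2
    linarith
  · have hzT : z ∈ T := (Finset.mem_union.1 hzST).resolve_left hzS
    have h1 : isol i w A ≤ isol i w (A ∪ S) := (core_absorb hsum hnn hS A).1
    have h2 : isol i w (A ∪ S) < isol i w (A ∪ S ∪ T) := by
      refine (core_absorb hsum hnn hT _).2 ?_
      intro h
      have : z ∈ (A ∪ S) ∩ T := by rw [h]; exact hzT
      rcases Finset.mem_union.1 (Finset.mem_inter.1 this).1 with h' | h'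
      exacts [hzA h', hzS h']
    rw [hAU] at h2
    linarith

theorem core_biUnion (hsum : ∀ v, Summable (w v)) (hnn : ∀ u v, 0 ≤ w u v)
    (P : Finset V) (c : V → Finset V) (hne : P.Nonempty)
    (hc : ∀ x ∈ P, IsCore i w (c x)) : IsCore i w (P.biUnion c) := by
  classical
  induction P using Finset.induction_on with
  | empty => exact absurd hne (by simp)
  | @insert a P' ha ih =>
    rw [Finset.biUnion_insert]
    rcases P'.eq_empty_or_nonempty with h | h
    · subst h
      simpa using hc a (Finset.mem_insert_self a ∅)
    · exact IsCore.union hsum hnn (hc a (Finset.mem_insert_self a P'))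
        (ih h fun x hx => hc x (Finset.mem_insert_of_mem hx))

theorem core_pos (hS : IsCore i w S) (hne : S.Nonempty) : 0 < isol i w S := by
  have := hS ∅ (Finset.empty_ssubset.2 hne)
  rwa [isol_empty] at this

theorem vtxWeight_eq_zero_iff (hsum : ∀ v, Summable (w v)) (hnn : ∀ u v, 0 ≤ w u v) {x : V}
    (h : vtxWeight w x = 0) : ∀ u, w x u = 0 := by
  intro u
  have h1 : w x u ≤ vtxWeight w x := Summable.le_tsum (hsum x) u fun j _ => hnn x j
  exact le_antisymm (h ▸ h1) (hnn x u)

theorem vtxWeight_ge_one (hsum : ∀ v, Summable (w v)) (hnn : ∀ u v, 0 ≤ w u v)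
    (hw1 : ∀ u v, w u v ≠ 0 → 1 ≤ w u v) {x z : V} (h : 0 < w x z) :
    1 ≤ vtxWeight w x := by
  have h1 : w x z ≤ vtxWeight w x := Summable.le_tsum (hsum x) z fun j _ => hnn x j
  exact le_trans (hw1 x z (ne_of_gt h)) h1

theorem core_vtx_one (hsum : ∀ v, Summable (w v)) (hnn : ∀ u v, 0 ≤ w u v)
    (hsymm : ∀ u v, w u v = w v u) (hw1 : ∀ u v, w u v ≠ 0 → 1 ≤ w u v)
    {S : Finset V} (hS : IsCore i w S) {x : V} (hx : x ∈ S) : 1 ≤ vtxWeight w x := by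
  by_cases hz : vtxWeight w x = 0
  · exfalso
    have hzero := vtxWeight_eq_zero_iff hsum hnn hz
    have hlt := hS (S.erase x) (Finset.erase_ssubset hx)
    have hv : vol w (S.erase x) = vol w S := by
      unfold vol
      rw [← Finset.add_sum_erase S _ hx, hz, zero_add]
    have hq : qv w (S.erase x) = qv w S := by
      unfold qv
      rw [← Finset.add_sum_erase S _ hx]
      have h1 : ∑ y ∈ S, w x y = 0 := Finset.sum_eq_zero fun y _ => hzero y
      rw [h1, zero_add]
      refine Finset.sum_congr rfl fun a ha => ?_
      rw [← Finset.add_sum_erase S _ hx]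
      have : w a x = 0 := by rw [hsymm]; exact hzero a
      rw [this, zero_add]
    rw [isol_eq i hsum, isol_eq i hsum, hv, hq] at hlt
    exact lt_irrefl _ hlt
  · have hpos : 0 < vtxWeight w x := lt_of_le_of_ne (vtxWeight_nonneg hnn x) (Ne.symm hz)
    obtain ⟨u, hu⟩ : ∃ u, 0 < w x u := by
      by_contra h
      push_neg at h
      have : vtxWeight w x ≤ 0 := tsum_nonpos fun u => h u
      linarith
    exact vtxWeight_ge_one hsum hnn hw1 hu

theorem comp_union_pos (hsum : ∀ v, Summable (w v)) (hnn : ∀ u v, 0 ≤ w u v)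
    (hsymm : ∀ u v, w u v = w v u) {M G : Finset V} (hM : IsCore i w M)
    (hGM : G ⊆ M) (hne : G.Nonempty)
    (hsep : ∀ x ∈ G, ∀ y ∈ M, y ∉ G → w x y = 0) : 0 < isol i w G := by
  have hun : G ∪ M \ G = M := Finset.union_sdiff_of_subset hGM
  have hd : Disjoint G (M \ G) := Finset.disjoint_sdiff
  have hadd : isol i w (G ∪ M \ G) = isol i w G + isol i w (M \ G) := by
    refine isol_add_of_sep hsum hnn hd fun a ha b hb => ?_
    obtain ⟨hbM, hbG⟩ := Finset.mem_sdiff.1 hb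
    refine ⟨hsep a ha b hbM hbG, ?_⟩
    rw [hsymm]; exact hsep a ha b hbM hbG
  rw [hun] at hadd
  have hss : M \ G ⊂ M := by
    obtain ⟨g, hg⟩ := hne
    refine Finset.ssubset_iff_subset_ne.2 ⟨Finset.sdiff_subset, fun h => ?_⟩
    have : g ∈ M \ G := h.symm ▸ hGM hg
    exact (Finset.mem_sdiff.1 this).2 hg
  have := hM _ hss
  linarith

inductive Reach (w : V → V → ℝ) (s : Set V) (v : V) : V → Prop
  | base (hv : v ∈ s) : Reach w s v v
  | step {x y : V} (hx : Reach w s v x) (hy : y ∈ s) (hw : 0 < w x y) : Reach w s v y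

theorem Reach.mem {s : Set V} {v x : V} (h : Reach w s v x) : x ∈ s ∧ v ∈ s := by
  induction h with
  | base hv => exact ⟨hv, hv⟩
  | step hx hy hw ih => exact ⟨hy, ih.2⟩

theorem Reach.mono {s t : Set V} {v x : V} (h : Reach w s v x) (hst : s ⊆ t) :
    Reach w t v x := by
  induction h with
  | base hv => exact Reach.base (hst hv)
  | step hx hy hw ih => exact Reach.step ih (hst hy) hw

theorem reach_of_walk (hsymm : ∀ u v, w u v = w v u) {s : Set V} {v : V}
    {a b : ↑s} (p : (SimpleGraph.induce s (gra w)).Walk a b)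
    (h : Reach w s v ↑a) : Reach w s v ↑b := by
  induction p with
  | nil => exact h
  | cons hadj p ih =>
    rename_i u c d
    refine ih ?_
    have hadj' : (gra w).Adj ↑u ↑c := hadj
    rw [gra, SimpleGraph.fromRel_adj] at hadj'
    have hpos : 0 < w ↑u ↑c := by
      rcases hadj'.2 with h' | h'
      · exact h'
      · rw [hsymm]; exact h'
    exact Reach.step h c.2 hpos

theorem reach_of_conn (hsymm : ∀ u v, w u v = w v u) {s : Set V} {v x : V}
    (hc : ConnSet w s) (hv : v ∈ s) (hx : x ∈ s) : Reach w s v x := by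
  obtain ⟨p⟩ := hc.preconnected ⟨v, hv⟩ ⟨x, hx⟩
  exact reach_of_walk hsymm p (Reach.base hv)

theorem reach_to_reachable (hsymm : ∀ u v, w u v = w v u) {s : Set V} {v x : V}
    (h : Reach w s v x) (hv : v ∈ s) :
    ∀ hx : x ∈ s, (SimpleGraph.induce s (gra w)).Reachable ⟨v, hv⟩ ⟨x, hx⟩ := by
  induction h with
  | base hv' => intro hx; rfl
  | step hx' hy' hw' ih =>
    rename_i x y
    intro hy
    by_cases hxy : x = y
    · subst hxy
      exact ih hy
    · refine (ih hx'.mem.1).trans (SimpleGraph.Adj.reachable ?_)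
      show (gra w).Adj x y
      rw [gra, SimpleGraph.fromRel_adj]
      exact ⟨hxy, Or.inl hw'⟩

theorem conn_of_reach (hsymm : ∀ u v, w u v = w v u) {s : Set V} {v : V} (hv : v ∈ s)
    (h : ∀ x ∈ s, Reach w s v x) : ConnSet w s := by
  rw [ConnSet, SimpleGraph.connected_iff]
  refine ⟨fun a b => ?_, ⟨⟨v, hv⟩⟩⟩
  have ha := reach_to_reachable hsymm (h ↑a a.2) hv a.2
  have hb := reach_to_reachable hsymm (h ↑b b.2) hv b.2
  exact ha.symm.trans hb

theorem reach_nbhd (hsymm : ∀ u v, w u v = w v u) {s : Set V} {v y : V}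
    (h : Reach w s v y) (hne : y ≠ v) :
    (∃ z, 0 < w y z) ∧ (∃ z, 0 < w v z) := by
  induction h with
  | base hv => exact absurd rfl hne
  | step hx hy hw ih =>
    rename_i x y'
    constructor
    · exact ⟨x, by rw [hsymm]; exact hw⟩
    · by_cases hxv : x = v
      · subst hxv; exact ⟨y', hw⟩
      · exact (ih hxv).2

end Lemmas

theorem bridged_regions_finite [DecidableEq V] (w : V → V → ℝ)
    (hsymm : ∀ u v, w u v = w v u) (hnn : ∀ u v, 0 ≤ w u v)
    (hsum : ∀ v, Summable (w v))
    -- `w₀`-bounded geometry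
    (w₀ : ℝ) (hw1 : ∀ u v, w u v ≠ 0 → 1 ≤ w u v) (hw0 : ∀ v, vtxWeight w v ≤ w₀)
    -- anchored expansion constant `iG > i > 0`
    (iG i : ℝ) (hi0 : 0 < i) (hiG : i < iG)
    (hanch : ∀ j : ℝ, j < iG → Anchored j w)
    (v : V) (ℛ : Set (Finset V))
    -- each `R ∈ ℛ` is a nonempty union of `i`-islands
    (hunion : ∀ R ∈ ℛ, R.Nonempty ∧ ∀ x ∈ R, ∃ C : Finset V,
      IsIsland i w (↑C : Set V) ∧ x ∈ C ∧ (↑C : Set V) ⊆ (↑R : Set V))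
    -- bridge structure interconnecting `R ∪ {v}` satisfying the counting bound
    (hbridge : ∀ R ∈ ℛ, ∃ B : Finset V,
      ConnSet w ((↑B : Set V) ∪ (↑R : Set V) ∪ {v}) ∧
        w₀ * (((↑B : Set V) ∪ {v}) \ coreUnion i w).ncard ≤ (iG - i) * vol w R) :
    ℛ.Finite := by
  classical
  rcases Set.eq_empty_or_nonempty ℛ with hRe | ⟨R₀, hR₀⟩
  · simp [hRe]
  -- `w₀ ≥ 1`
  have hw₀1 : 1 ≤ w₀ := by
    obtain ⟨⟨x₀, hx₀⟩, hisl₀⟩ := hunion R₀ hR₀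
    obtain ⟨C₀, hC₀, hx₀C, -⟩ := hisl₀ x₀ hx₀
    obtain ⟨S₀, hS₀core, hx₀S₀⟩ := hC₀.2.1 hx₀C
    exact le_trans (core_vtx_one hsum hnn hsymm hw1 hS₀core hx₀S₀) (hw0 x₀)
  have hw₀0 : 0 < w₀ := by linarith
  -- the anchored level `j`
  set j : ℝ := max i (iG * w₀ / (w₀ + (iG - i))) with hjdef
  have hden : 0 < w₀ + (iG - i) := by linarith
  have hjlt : j < iG := by
    apply max_lt hiG
    rw [div_lt_iff₀ hden]
    nlinarith
  have hji : i ≤ j := le_max_left _ _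
  have hjc : iG * w₀ ≤ j * (w₀ + (iG - i)) := by
    have h := le_max_right i (iG * w₀ / (w₀ + (iG - i)))
    rw [div_le_iff₀ hden] at h
    linarith [h]
  -- choose a core through each vertex of `A_i`
  have hcore : ∀ x : V, ∃ cx : Finset V, x ∈ coreUnion i w → IsCore i w cx ∧ x ∈ cx := by
    intro x
    by_cases h : x ∈ coreUnion i w
    · obtain ⟨S, hS, hxS⟩ := h
      exact ⟨S, fun _ => ⟨hS, hxS⟩⟩
    · exact ⟨∅, fun h' => absurd h' h⟩
  choose c hc using hcore
  -- main construction
  have main : ∀ R ∈ ℛ, ∃ T₀ : Finset V,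
      (v ∈ T₀ ∧ ConnSet w (↑T₀ : Set V) ∧ 0 < isol j w T₀) ∧ R ⊆ T₀ := by
    intro R hRm
    obtain ⟨B, hconn, hcount⟩ := hbridge R hRm
    obtain ⟨hRne, hisl⟩ := hunion R hRm
    have hRcu : ∀ x ∈ R, x ∈ coreUnion i w := by
      intro x hx
      obtain ⟨C, hC, hxC, -⟩ := hisl x hx
      exact hC.2.1 hxC
    set S : Finset V := B ∪ R ∪ {v} with hSdef
    have hScoe : (↑S : Set V) = (↑B : Set V) ∪ (↑R : Set V) ∪ {v} := by
      simp [hSdef]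
    have hvS : v ∈ S := by simp [hSdef]
    have hRS : R ⊆ S := fun x hx =>
      Finset.mem_union_left _ (Finset.mem_union_right _ hx)
    set P : Finset V := S.filter (fun x => x ∈ coreUnion i w) with hPdef
    set M : Finset V := P.biUnion c with hMdef
    have hPM : ∀ x ∈ P, x ∈ M := by
      intro x hx
      exact Finset.mem_biUnion.2 ⟨x, hx, (hc x (Finset.mem_filter.1 hx).2).2⟩
    have hMcu : ∀ y ∈ M, y ∈ coreUnion i w := by
      intro y hy
      obtain ⟨x, hxP, hyc⟩ := Finset.mem_biUnion.1 hy
      exact ⟨c x, (hc x (Finset.mem_filter.1 hxP).2).1, hyc⟩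
    have hPne : P.Nonempty := by
      obtain ⟨x₁, hx₁⟩ := hRne
      exact ⟨x₁, Finset.mem_filter.2 ⟨hRS hx₁, hRcu x₁ hx₁⟩⟩
    have hMcore : IsCore i w M :=
      core_biUnion hsum hnn P c hPne fun x hx => (hc x (Finset.mem_filter.1 hx).2).1
    set T : Finset V := S ∪ M with hTdef
    have hST : S ⊆ T := Finset.subset_union_left
    have hconn' : ConnSet w (↑S : Set V) := by rw [hScoe]; exact hconn
    set T₀ : Finset V := T.filter (fun x => Reach w (↑T : Set V) v x) with hT₀def
    have hT₀T : T₀ ⊆ T := Finset.filter_subset _ _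
    have hT₀reach : ∀ x ∈ T₀, Reach w (↑T : Set V) v x := by
      intro x hx
      exact (Finset.mem_filter.1 hx).2
    have hST₀ : ∀ x ∈ S, x ∈ T₀ := by
      intro x hx
      refine Finset.mem_filter.2 ⟨hST hx, ?_⟩
      exact (reach_of_conn hsymm hconn' (Finset.mem_coe.2 hvS) (Finset.mem_coe.2 hx)).mono
        (Finset.coe_subset.2 hST)
    have hvT₀ : v ∈ T₀ := hST₀ v hvS
    have hmemT₀ : ∀ y, y ∈ T → Reach w (↑T : Set V) v y → y ∈ T₀ := by
      intro y hyT hy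
      exact Finset.mem_filter.2 ⟨hyT, hy⟩
    -- strengthened reachability
    have hstr : ∀ x, Reach w (↑T : Set V) v x → Reach w (↑T₀ : Set V) v x := by
      intro x h
      induction h with
      | base hv => exact Reach.base (Finset.mem_coe.2 hvT₀)
      | step hx hy hw ih =>
        rename_i x' y'
        refine Reach.step ih (Finset.mem_coe.2 ?_) hw
        exact hmemT₀ y' (Finset.mem_coe.1 hy) (Reach.step hx hy hw)
    have hconnT₀ : ConnSet w (↑T₀ : Set V) :=
      conn_of_reach hsymm (Finset.mem_coe.2 hvT₀)
        (fun x hx => hstr x (hT₀reach x (Finset.mem_coe.1 hx)))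
    -- the core part and the bridge part of `T₀`
    set G : Finset V := T₀ ∩ M with hGdef
    set F : Finset V := T₀ \ M with hFdef
    have hGM : G ⊆ M := Finset.inter_subset_right
    have hGT₀ : G ⊆ T₀ := Finset.inter_subset_left
    have hRG : R ⊆ G := by
      intro x hx
      refine Finset.mem_inter.2 ⟨hST₀ x (hRS hx), ?_⟩
      exact hPM x (Finset.mem_filter.2 ⟨hRS hx, hRcu x hx⟩)
    have hGne : G.Nonempty := hRne.mono hRG
    have hcross : ∀ x ∈ T₀, ∀ y ∈ T, y ∉ T₀ → w x y = 0 := by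
      intro x hx y hyT hyn
      by_contra h
      have hp : 0 < w x y := lt_of_le_of_ne (hnn x y) (Ne.symm h)
      exact hyn (hmemT₀ y hyT (Reach.step (hT₀reach x hx) (Finset.mem_coe.2 hyT) hp))
    have hsepG : ∀ x ∈ G, ∀ y ∈ M, y ∉ G → w x y = 0 := by
      intro x hx y hyM hyG
      refine hcross x (hGT₀ hx) y (Finset.mem_union_right _ hyM) fun hyT₀ => ?_
      exact hyG (Finset.mem_inter.2 ⟨hyT₀, hyM⟩)
    have hGpos : 0 < isol i w G := comp_union_pos hsum hnn hsymm hMcore hGM hGne hsepG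
    have hbdG : bdry w G < i * vol w G := by
      rw [isol] at hGpos; linarith
    -- bridge part is small
    have hFsub : (↑F : Set V) ⊆ ((↑B : Set V) ∪ {v}) \ coreUnion i w := by
      intro x hx
      obtain ⟨hxT₀, hxM⟩ := Finset.mem_sdiff.1 (Finset.mem_coe.1 hx)
      have hxT : x ∈ T := hT₀T hxT₀
      have hxS : x ∈ S := by
        rcases Finset.mem_union.1 hxT with h | h
        · exact h
        · exact absurd h hxM
      have hxcu : x ∉ coreUnion i w := fun h =>
        hxM (hPM x (Finset.mem_filter.2 ⟨hxS, h⟩))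
      refine ⟨?_, hxcu⟩
      rcases Finset.mem_union.1 hxS with h | h
      · rcases Finset.mem_union.1 h with h' | h'
        · exact Or.inl (Finset.mem_coe.2 h')
        · exact absurd (hRcu x h') hxcu
      · exact Or.inr (Finset.mem_singleton.1 h)
    have hDfin : (((↑B : Set V) ∪ {v}) \ coreUnion i w).Finite :=
      (B.finite_toSet.union (Set.finite_singleton v)).diff
    have hFcard : (F.card : ℝ) ≤ ((((↑B : Set V) ∪ {v}) \ coreUnion i w).ncard : ℝ) := by
      have := Set.ncard_le_ncard hFsub hDfin
      rw [Set.ncard_coe_finset] at this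
      exact_mod_cast this
    have hFvtx : ∀ x ∈ F, 1 ≤ vtxWeight w x := by
      intro x hx
      obtain ⟨hxT₀, hxM⟩ := Finset.mem_sdiff.1 hx
      obtain ⟨r, hr⟩ := hRne
      have hrM : r ∈ M := hGM (hRG hr)
      by_cases hxv : x = v
      · subst hxv
        have hrT₀ : r ∈ T₀ := hGT₀ (hRG hr)
        have hrv : r ≠ x := fun h => hxM (h ▸ hrM)
        obtain ⟨-, z, hz⟩ := reach_nbhd hsymm (hT₀reach r hrT₀) hrv
        exact vtxWeight_ge_one hsum hnn hw1 hz
      · obtain ⟨⟨z, hz⟩, -⟩ := reach_nbhd hsymm (hT₀reach x hxT₀) hxv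
        exact vtxWeight_ge_one hsum hnn hw1 hz
    -- decompose `T₀`
    have hGF : G ∪ F = T₀ := by
      rw [hGdef, hFdef, Finset.union_comm]
      exact Finset.sdiff_union_inter T₀ M
    have hGFd : Disjoint G F := by
      rw [Finset.disjoint_left]
      intro x hxG hxF
      exact (Finset.mem_sdiff.1 hxF).2 (hGM hxG)
    have hvolT₀ : vol w T₀ = vol w G + vol w F := by
      rw [← hGF]; exact Finset.sum_union hGFd
    have hvolF1 : (F.card : ℝ) ≤ vol w F := by
      have : ∑ _x ∈ F, (1 : ℝ) ≤ ∑ x ∈ F, vtxWeight w x := Finset.sum_le_sum hFvtx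
      simpa [vol] using this
    have hvolFw : vol w F ≤ w₀ * F.card := by
      have : ∑ x ∈ F, vtxWeight w x ≤ ∑ _x ∈ F, w₀ :=
        Finset.sum_le_sum fun x _ => hw0 x
      simpa [vol, mul_comm] using this
    -- boundary estimate
    have hbd : bdry w T₀ ≤ bdry w G + vol w F := by
      unfold bdry vol
      rw [← hGF, Finset.sum_union hGFd]
      refine add_le_add (Finset.sum_le_sum fun x hxG => ?_) (Finset.sum_le_sum fun x hxF => ?_)
      · refine Summable.tsum_le_tsum ?_ ((hsum x).indicator _) ((hsum x).indicator _)
        intro u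
        refine Set.indicator_le_indicator_of_subset ?_ (fun a => hnn x a) u
        rw [Set.compl_subset_compl]
        exact Finset.coe_subset.2 Finset.subset_union_left
      · refine Summable.tsum_le_tsum ?_ ((hsum x).indicator _) (hsum x)
        intro u
        exact Set.indicator_apply_le' (fun _ => le_rfl) (fun _ => hnn x u)
    -- the final inequality
    have hg0 : 0 ≤ vol w G := vol_nonneg hnn G
    have hn0 : (0 : ℝ) ≤ F.card := Nat.cast_nonneg _
    have hcnt : w₀ * (F.card : ℝ) ≤ (iG - i) * vol w G := by
      calc w₀ * (F.card : ℝ)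
          ≤ w₀ * ((((↑B : Set V) ∪ {v}) \ coreUnion i w).ncard : ℝ) :=
            mul_le_mul_of_nonneg_left hFcard (by linarith)
        _ ≤ (iG - i) * vol w R := hcount
        _ ≤ (iG - i) * vol w G :=
            mul_le_mul_of_nonneg_left (vol_mono hnn hRG) (by linarith)
    have hkey : i * vol w G + w₀ * (F.card : ℝ) ≤ j * (vol w G + (F.card : ℝ)) := by
      rcases le_or_gt w₀ j with h | h
      · have h1 : i * vol w G ≤ j * vol w G := mul_le_mul_of_nonneg_right hji hg0
        have h2 : w₀ * (F.card : ℝ) ≤ j * (F.card : ℝ) :=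
          mul_le_mul_of_nonneg_right h hn0
        linarith
      · have h1 : (w₀ - j) * (w₀ * (F.card : ℝ)) ≤ (w₀ - j) * ((iG - i) * vol w G) :=
          mul_le_mul_of_nonneg_left hcnt (by linarith)
        have h2 : (iG - i) * (w₀ - j) ≤ (j - i) * w₀ := by nlinarith [hjc]
        have h3 : (iG - i) * (w₀ - j) * vol w G ≤ (j - i) * w₀ * vol w G :=
          mul_le_mul_of_nonneg_right h2 hg0
        have h4 : w₀ * ((w₀ - j) * (F.card : ℝ)) ≤ w₀ * ((j - i) * vol w G) := by
          nlinarith [h1, h3]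
        have h5 : (w₀ - j) * (F.card : ℝ) ≤ (j - i) * vol w G :=
          le_of_mul_le_mul_left h4 hw₀0
        nlinarith [h5]
    have hvol2 : vol w G + (F.card : ℝ) ≤ vol w T₀ := by
      rw [hvolT₀]; linarith
    have hj0 : 0 < j := lt_of_lt_of_le hi0 hji
    have hfinal : 0 < isol j w T₀ := by
      rw [isol]
      have : bdry w T₀ < j * vol w T₀ := by
        calc bdry w T₀ ≤ bdry w G + vol w F := hbd
          _ ≤ bdry w G + w₀ * F.card := by linarith
          _ < i * vol w G + w₀ * F.card := by linarith
          _ ≤ j * (vol w G + (F.card : ℝ)) := hkey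
          _ ≤ j * vol w T₀ := mul_le_mul_of_nonneg_left hvol2 (le_of_lt hj0)
      linarith
    exact ⟨T₀, ⟨hvT₀, hconnT₀, hfinal⟩, fun x hx => hGT₀ (hRG hx)⟩
  -- conclude finiteness
  have hAfin := hanch j hjlt v
  refine Set.Finite.subset (Set.Finite.biUnion hAfin
    (fun T _ => T.powerset.finite_toSet)) ?_
  intro R hRm
  obtain ⟨T₀, hT₀, hsub⟩ := main R hRm
  exact Set.mem_biUnion hT₀ (Finset.mem_coe.2 (Finset.mem_powerset.2 hsub))
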